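/- Let Ω ⊂ ℂⁿ be a domain and φ a C² plurisubharmonic function on Ω. If det(Hess_ℂ φ) = 0 everywhere on Ω, then φ is maximal: for every relatively compact open U ⋐ Ω and every plurisubharmonic v on a neighborhood of Ū with v ≤ φ on ∂U, one has v ≤ φ on U. (C² case of Błocki's characterization MA(φ)=0 ⟺ φ maximal.) -/

import Mathlib

open MeasureTheory Metric

/-- Second real directional derivative. -/
noncomputable def D2 {E : Type*} [NormedAddCommGroup E] [NormedSpace ℝ E]
    (f : E → ℝ) (z v w : E) : ℝ :=
  fderiv ℝ (fun x => fderiv ℝ f x v) z w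

/-- The Levi form (complex Hessian) ∂²f/∂z∂z̄ evaluated at directions (v, w̄). -/
noncomputable def levi {E : Type*} [NormedAddCommGroup E] [NormedSpace ℂ E]
    (f : E → ℝ) (z v w : E) : ℂ :=
  (1/4 : ℂ) * (((D2 f z v w + D2 f z (Complex.I • v) (Complex.I • w) : ℝ) : ℂ)
    + Complex.I * ((D2 f z (Complex.I • v) w - D2 f z v (Complex.I • w) : ℝ) : ℂ))

/-- Plurisubharmonicity expressed through upper semicontinuity and the submean
inequality on circles inside complex lines. -/
def SubmeanOn {E : Type*} [NormedAddCommGroup E] [NormedSpace ℂ E]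
    (u : E → ℝ) (Ω : Set E) : Prop :=
  UpperSemicontinuousOn u Ω ∧
  ∀ z ∈ Ω, ∀ (v : E) (r : ℝ), 0 < r →
    (∀ t : ℂ, ‖t‖ ≤ r → z + t • v ∈ Ω) →
    IntervalIntegrable
      (fun θ : ℝ => u (z + ((r : ℂ) * Complex.exp ((θ : ℂ) * Complex.I)) • v))
      MeasureTheory.volume 0 (2 * Real.pi) ∧
    u z ≤ (1 / (2 * Real.pi)) *
      ∫ θ in (0:ℝ)..(2 * Real.pi), u (z + ((r : ℂ) * Complex.exp ((θ : ℂ) * Complex.I)) • v)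

/-- The complex Hessian matrix (∂²f/∂z_i∂z̄_j) of f : ℂⁿ → ℝ at z. -/
noncomputable def cHess {n : ℕ} (f : (Fin n → ℂ) → ℝ) (z : Fin n → ℂ) :
    Matrix (Fin n) (Fin n) ℂ :=
  Matrix.of fun i j => levi f z (Pi.single i 1) (Pi.single j 1)

set_option maxHeartbeats 1600000


lemma usc_exists_max {X : Type*} [TopologicalSpace X] {K : Set X} (hK : IsCompact K)
    (hne : K.Nonempty) {u : X → ℝ} (hu : UpperSemicontinuousOn u K) :
    ∃ x ∈ K, ∀ y ∈ K, u y ≤ u x := by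
  by_contra h
  push_neg at h
  choose w hwK hwlt using h
  have hnhds : ∀ x (hx : x ∈ K), ∃ O : Set X, IsOpen O ∧ x ∈ O ∧
      ∀ y ∈ O ∩ K, u y < u (w x hx) := by
    intro x hx
    have := hu x hx (u (w x hx)) (hwlt x hx)
    rw [eventually_nhdsWithin_iff] at this
    rcases eventually_nhds_iff.1 this with ⟨O, hO1, hO2, hO3⟩
    exact ⟨O, hO2, hO3, fun y hy => hO1 y hy.1 hy.2⟩
  choose O hOopen hOmem hOlt using hnhds
  obtain ⟨t, hcover⟩ := hK.elim_nhds_subcover' (fun x hx => O x hx)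
    (fun x hx => (hOopen x hx).mem_nhds (hOmem x hx))
  have htne : t.Nonempty := by
    rcases hne with ⟨x0, hx0⟩
    rcases Set.mem_iUnion₂.1 (hcover hx0) with ⟨i, hit, _⟩
    exact ⟨i, hit⟩
  obtain ⟨m, hmt, hmax⟩ := t.exists_max_image (fun i => u (w i i.2)) htne
  set ym := w m m.2
  have hymK : ym ∈ K := hwK m m.2
  rcases Set.mem_iUnion₂.1 (hcover hymK) with ⟨j, hjt, hjO⟩
  have h1 : u ym < u (w j j.2) := hOlt j j.2 ym ⟨hjO, hymK⟩
  have h2 : u (w j j.2) ≤ u ym := hmax j hjt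
  linarith


/-- quantitative second-order Taylor upper bound -/
lemma taylor_ub {E : Type*} [NormedAddCommGroup E] [NormedSpace ℝ E]
    (φ : E → ℝ) (s : Set E) (hs : IsOpen s) (hφ : ContDiffOn ℝ 2 φ s)
    (z : E) (hz : z ∈ s) (η : ℝ) (hη : 0 < η) :
    ∃ δ > 0, closedBall z δ ⊆ s ∧ ∀ x ∈ closedBall z δ,
      φ x ≤ φ z + fderiv ℝ φ z (x - z)
        + (1/2) * fderiv ℝ (fderiv ℝ φ) z (x - z) (x - z) + η * ‖x - z‖^2 := by
  set f' := fderiv ℝ φ with hf'def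
  set B := fderiv ℝ f' z with hBdef
  have hφ1 : ContDiffOn ℝ 1 f' s := hφ.fderiv_of_isOpen hs (by norm_num)
  have hdφ : ∀ x ∈ s, HasFDerivAt φ (f' x) x := fun x hx =>
    ((hφ.differentiableOn (by norm_num)).differentiableAt (hs.mem_nhds hx)).hasFDerivAt
  have hdf' : ∀ x ∈ s, HasFDerivAt f' (fderiv ℝ f' x) x := fun x hx =>
    ((hφ1.differentiableOn (by norm_num)).differentiableAt (hs.mem_nhds hx)).hasFDerivAt
  have hcont : ContinuousOn (fun x => fderiv ℝ f' x) s :=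
    hφ1.continuousOn_fderiv_of_isOpen hs le_rfl
  have hsymm : ∀ a b : E, B a b = B b a := by
    have hev : ∀ᶠ y in nhds z, HasFDerivAt φ (f' y) y := by
      filter_upwards [hs.mem_nhds hz] with y hy using hdφ y hy
    exact fun a b => second_derivative_symmetric_of_eventually hev (hdf' z hz) a b
  have hmem : {x | ‖fderiv ℝ f' x - B‖ ≤ η} ∩ s ∈ nhds z := by
    have hca : ContinuousAt (fun x => fderiv ℝ f' x) z :=
      hcont.continuousAt (hs.mem_nhds hz)
    have h1 : {x | ‖fderiv ℝ f' x - B‖ ≤ η} ∈ nhds z := by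
      have : ∀ᶠ x in nhds z, dist (fderiv ℝ f' x) B ≤ η :=
        hca.eventually (Metric.closedBall_mem_nhds B hη) |>.mono (fun x hx => by
          simpa [Metric.mem_closedBall] using hx)
      filter_upwards [this] with x hx
      exact (dist_eq_norm (fderiv ℝ f' x) B).symm.trans_le hx
    exact Filter.inter_mem h1 (hs.mem_nhds hz)
  obtain ⟨δ', hδ'pos, hδ'⟩ := Metric.mem_nhds_iff.1 hmem
  refine ⟨δ'/2, by positivity, ?_, ?_⟩
  · intro x hx
    exact (hδ' (lt_of_le_of_lt (mem_closedBall.1 hx) (by linarith))).2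
  have hball : closedBall z (δ'/2) ⊆ {x | ‖fderiv ℝ f' x - B‖ ≤ η} ∩ s := by
    intro x hx
    exact hδ' (lt_of_le_of_lt (mem_closedBall.1 hx) (by linarith))
  set δ := δ'/2 with hδdef
  have hδpos : (0:ℝ) < δ := by positivity
  have hBsub : ∀ y : E, HasFDerivAt (fun y => B (y - z)) B y := by
    intro y
    have := B.hasFDerivAt.comp y ((hasFDerivAt_id y).sub_const z)
    exact this
  -- Step 1
  have step1 : ∀ x ∈ closedBall z δ, ‖f' x - f' z - B (x - z)‖ ≤ η * ‖x - z‖ := by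
    intro x hx
    have hG : ∀ y ∈ closedBall z δ, HasFDerivWithinAt (fun y => f' y - B (y - z))
        (fderiv ℝ f' y - B) (closedBall z δ) y := fun y hy =>
      ((hdf' y (hball hy).2).sub (hBsub y)).hasFDerivWithinAt
    have hbd : ∀ y ∈ closedBall z δ, ‖fderiv ℝ f' y - B‖ ≤ η :=
      fun y hy => (hball hy).1
    have h2 := (convex_closedBall z δ).norm_image_sub_le_of_norm_hasFDerivWithin_le
      hG hbd (mem_closedBall_self hδpos.le) hx
    have e : f' x - B (x - z) - (f' z - B (z - z)) = f' x - f' z - B (x - z) := by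
      simp only [sub_self, map_zero, sub_zero]; abel
    rw [show ((fun y => f' y - B (y - z)) x - (fun y => f' y - B (y - z)) z)
        = f' x - B (x - z) - (f' z - B (z - z)) from rfl, e] at h2
    exact h2
  -- Step 2
  intro x hx
  set ρ := ‖x - z‖ with hρdef
  have hρδ : ρ ≤ δ := by
    have := mem_closedBall.1 hx; rwa [dist_eq_norm] at this
  have hsub : closedBall z ρ ⊆ closedBall z δ := closedBall_subset_closedBall hρδ
  have hF : ∀ y ∈ closedBall z ρ, HasFDerivWithinAt
      (fun y => φ y - f' z (y - z) - (1/2) * B (y - z) (y - z))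
      (f' y - f' z - B (y - z)) (closedBall z ρ) y := by
    intro y hy
    have hyδ : y ∈ closedBall z δ := hsub hy
    have h1 : HasFDerivAt (fun y => f' z (y - z)) (f' z) y := by
      have := (f' z).hasFDerivAt.comp y ((hasFDerivAt_id y).sub_const z)
      exact this
    have hB2 : HasFDerivAt (fun y : E => y - z) (ContinuousLinearMap.id ℝ E) y :=
      (hasFDerivAt_id y).sub_const z
    have hqB : HasFDerivAt (fun y => B (y - z) (y - z))
        ((B (y - z)).comp (ContinuousLinearMap.id ℝ E) + B.flip (y - z)) y :=
      (hBsub y).clm_apply hB2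
    have hq : HasFDerivAt (fun y => (1/2) * B (y - z) (y - z)) (B (y - z)) y := by
      have h3 := hqB.const_mul (1/2 : ℝ)
      have e : (1/2 : ℝ) • ((B (y - z)).comp (ContinuousLinearMap.id ℝ E) + B.flip (y - z))
          = B (y - z) := by
        ext h
        simp only [ContinuousLinearMap.smul_apply, ContinuousLinearMap.add_apply,
          ContinuousLinearMap.coe_comp', Function.comp_apply, ContinuousLinearMap.coe_id',
          id_eq, ContinuousLinearMap.flip_apply, smul_eq_mul]
        rw [hsymm h (y - z)]
        ring
      rwa [e] at h3
    exact (((hdφ y (hball hyδ).2).sub h1).sub hq).hasFDerivWithinAt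
  have hbd2 : ∀ y ∈ closedBall z ρ, ‖f' y - f' z - B (y - z)‖ ≤ η * ρ := by
    intro y hy
    have h4 := step1 y (hsub hy)
    have hyρ : ‖y - z‖ ≤ ρ := by
      have := mem_closedBall.1 hy; rwa [dist_eq_norm] at this
    nlinarith [norm_nonneg (f' y - f' z - B (y - z)), hη.le]
  have hρ0 : (0:ℝ) ≤ ρ := norm_nonneg _
  have hxρ : x ∈ closedBall z ρ := by
    rw [mem_closedBall, dist_eq_norm]
  have h5 := (convex_closedBall z ρ).norm_image_sub_le_of_norm_hasFDerivWithin_le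
    hF hbd2 (mem_closedBall_self hρ0) hxρ
  have e5 : (fun y => φ y - f' z (y - z) - (1/2) * B (y - z) (y - z)) x
      - (fun y => φ y - f' z (y - z) - (1/2) * B (y - z) (y - z)) z
      = φ x - f' z (x - z) - (1/2) * B (x - z) (x - z) - φ z := by
    simp only [sub_self, map_zero, mul_zero, sub_zero]
  rw [e5] at h5
  rw [Real.norm_eq_abs] at h5
  have h6 := (abs_le.1 h5).2
  have e7 : η * ρ * ‖x - z‖ = η * ‖x - z‖^2 := by rw [hρdef]; ring
  linarith [h6]

lemma D2_eq' {E : Type*} [NormedAddCommGroup E] [NormedSpace ℝ E]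
    (f : E → ℝ) (z : E) (hd : DifferentiableAt ℝ (fderiv ℝ f) z) (v w : E) :
    D2 f z v w = fderiv ℝ (fderiv ℝ f) z w v := by
  have h : HasFDerivAt (fun x => fderiv ℝ f x v)
      ((ContinuousLinearMap.apply ℝ ℝ v).comp (fderiv ℝ (fderiv ℝ f) z)) z :=
    (ContinuousLinearMap.apply ℝ ℝ v).hasFDerivAt.comp z hd.hasFDerivAt
  simp only [D2, h.fderiv, ContinuousLinearMap.coe_comp', Function.comp_apply,
    ContinuousLinearMap.apply_apply]

section Lam
variable {E : Type*} [NormedAddCommGroup E] [NormedSpace ℂ E]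

noncomputable def Lam (B : E →L[ℝ] E →L[ℝ] ℝ) (v w : E) : ℂ :=
  (1/4 : ℂ) * (((B w v + B (Complex.I • w) (Complex.I • v) : ℝ) : ℂ)
    + Complex.I * ((B w (Complex.I • v) - B (Complex.I • w) v : ℝ) : ℂ))

lemma cdecomp (c : ℂ) (v : E) : c • v = c.re • v + c.im • (Complex.I • v) := by
  have h : c = (c.re : ℂ) + (c.im : ℂ) * Complex.I := (Complex.re_add_im c).symm
  conv_lhs => rw [h]
  rw [add_smul, mul_smul, ← Complex.coe_algebraMap, algebraMap_smul, algebraMap_smul]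

lemma I_smul_I (v : E) : Complex.I • (Complex.I • v) = -v := by
  rw [smul_smul, Complex.I_mul_I, neg_one_smul]

lemma Lam_zero_left (B : E →L[ℝ] E →L[ℝ] ℝ) (w : E) : Lam B 0 w = 0 := by
  simp [Lam]

lemma Lam_add_left (B : E →L[ℝ] E →L[ℝ] ℝ) (v v' w : E) :
    Lam B (v + v') w = Lam B v w + Lam B v' w := by
  simp only [Lam, smul_add, map_add]
  push_cast
  ring

lemma Lam_smul_left (B : E →L[ℝ] E →L[ℝ] ℝ) (c : ℂ) (v w : E) :
    Lam B (c • v) w = (starRingEnd ℂ) c * Lam B v w := by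
  have hd : c • v = c.re • v + c.im • (Complex.I • v) := cdecomp c v
  have hdI : Complex.I • (c • v) = c.re • (Complex.I • v) + c.im • (-v) := by
    rw [smul_comm, cdecomp c (Complex.I • v), I_smul_I]
  have hc : (starRingEnd ℂ) c = (c.re : ℂ) - (c.im : ℂ) * Complex.I := by
    simp [Complex.ext_iff]
  simp only [Lam]
  rw [hdI, hd, hc]
  simp only [map_add, _root_.map_smul, map_neg, smul_eq_mul,
    ContinuousLinearMap.add_apply, ContinuousLinearMap.smul_apply,
    ContinuousLinearMap.neg_apply]
  push_cast
  ring_nf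
  simp only [Complex.I_sq]
  ring

lemma Lam_zero_right (B : E →L[ℝ] E →L[ℝ] ℝ) (v : E) : Lam B v 0 = 0 := by
  simp [Lam]

lemma Lam_add_right (B : E →L[ℝ] E →L[ℝ] ℝ) (v w w' : E) :
    Lam B v (w + w') = Lam B v w + Lam B v w' := by
  simp only [Lam, smul_add, map_add, ContinuousLinearMap.add_apply]
  push_cast
  ring

lemma Lam_smul_right (B : E →L[ℝ] E →L[ℝ] ℝ) (c : ℂ) (v w : E) :
    Lam B v (c • w) = c * Lam B v w := by
  have hd : c • w = c.re • w + c.im • (Complex.I • w) := cdecomp c w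
  have hdI : Complex.I • (c • w) = c.re • (Complex.I • w) + c.im • (-w) := by
    rw [smul_comm, cdecomp c (Complex.I • w), I_smul_I]
  have hc : c = (c.re : ℂ) + (c.im : ℂ) * Complex.I := (Complex.re_add_im c).symm
  simp only [Lam]
  rw [hdI, hd]
  conv_rhs => rw [hc]
  simp only [map_add, _root_.map_smul, map_neg, smul_eq_mul,
    ContinuousLinearMap.add_apply, ContinuousLinearMap.smul_apply,
    ContinuousLinearMap.neg_apply]
  push_cast
  ring_nf
  simp only [Complex.I_sq]
  ring

lemma Lam_sum_left {ι : Type*} (B : E →L[ℝ] E →L[ℝ] ℝ) (m : Finset ι) (f : ι → E) (w : E) :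
    Lam B (∑ i ∈ m, f i) w = ∑ i ∈ m, Lam B (f i) w := by
  classical
  induction m using Finset.induction_on with
  | empty => simp [Lam_zero_left]
  | @insert _ _ h ih => rw [Finset.sum_insert h, Finset.sum_insert h, Lam_add_left, ih]

lemma Lam_sum_right {ι : Type*} (B : E →L[ℝ] E →L[ℝ] ℝ) (m : Finset ι) (v : E) (f : ι → E) :
    Lam B v (∑ i ∈ m, f i) = ∑ i ∈ m, Lam B v (f i) := by
  classical
  induction m using Finset.induction_on with
  | empty => simp [Lam_zero_right]
  | @insert _ _ h ih => rw [Finset.sum_insert h, Finset.sum_insert h, Lam_add_right, ih]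

end Lam

lemma levi_eq_Lam {E : Type*} [NormedAddCommGroup E] [NormedSpace ℂ E]
    (f : E → ℝ) (z : E) (hd : DifferentiableAt ℝ (fderiv ℝ f) z) (v w : E) :
    levi f z v w = Lam (fderiv ℝ (fderiv ℝ f) z) v w := by
  rw [levi, Lam, D2_eq' f z hd, D2_eq' f z hd, D2_eq' f z hd, D2_eq' f z hd]

/-- existence of null direction for the trace of B-pair -/
lemma exists_null_dir {n : ℕ} (φ : (Fin n → ℂ) → ℝ) (z : Fin n → ℂ)
    (hd : DifferentiableAt ℝ (fderiv ℝ φ) z) (hdet : (cHess φ z).det = 0) :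
    ∃ a : Fin n → ℂ, a ≠ 0 ∧
      fderiv ℝ (fderiv ℝ φ) z a a
        + fderiv ℝ (fderiv ℝ φ) z (Complex.I • a) (Complex.I • a) = 0 := by
  obtain ⟨a, ha0, hker⟩ := (Matrix.exists_mulVec_eq_zero_iff).2 hdet
  set B := fderiv ℝ (fderiv ℝ φ) z with hB
  have hrepr : ∀ x : Fin n → ℂ, x = ∑ i : Fin n, x i • (Pi.single i 1 : Fin n → ℂ) := by
    intro x
    ext j
    simp [Finset.sum_apply, Pi.single_apply]
  have step : ∀ b : Fin n → ℂ, Lam B a b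
      = ∑ i : Fin n, (starRingEnd ℂ) (a i) * Lam B (Pi.single i 1) b := by
    intro b
    conv_lhs => rw [hrepr a]
    rw [Lam_sum_left]
    exact Finset.sum_congr rfl (fun i _ => Lam_smul_left B (a i) _ b)
  have step2 : ∀ i, Lam B (Pi.single i 1) a
      = ∑ j : Fin n, (cHess φ z) i j * a j := by
    intro i
    conv_lhs => rw [hrepr a]
    rw [Lam_sum_right]
    refine Finset.sum_congr rfl (fun j _ => ?_)
    rw [Lam_smul_right,
      show (cHess φ z) i j = levi φ z (Pi.single i 1) (Pi.single j 1) from rfl,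
      levi_eq_Lam φ z hd]
    ring
  have hLam0 : Lam B a a = 0 := by
    rw [step a]
    refine Finset.sum_eq_zero (fun i _ => ?_)
    rw [step2 i]
    have : (cHess φ z).mulVec a i = 0 := by rw [hker]; rfl
    rw [show ∑ j : Fin n, (cHess φ z) i j * a j = (cHess φ z).mulVec a i from rfl,
      this, mul_zero]
  have hre := congrArg Complex.re hLam0
  simp only [Lam, Complex.mul_re, Complex.add_re, Complex.ofReal_re, Complex.mul_im,
    Complex.I_re, Complex.I_im, Complex.ofReal_im, Complex.add_im, Complex.zero_re] at hre
  norm_num at hre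
  exact ⟨a, ha0, hre⟩


lemma integral_trig (C0 C1 C2 C3 C4 C5 : ℝ) :
    ∫ θ in (0:ℝ)..(2*Real.pi), (C0 + C1 * Real.cos θ + C2 * Real.sin θ
      + C3 * Real.cos θ^2 + C4 * (Real.cos θ * Real.sin θ) + C5 * Real.sin θ^2)
    = 2*Real.pi*C0 + Real.pi*C3 + Real.pi*C5 := by
  have key : ∀ θ : ℝ, HasDerivAt (fun t => C0*t + C1*Real.sin t - C2*Real.cos t
      + C3*((t + Real.sin t*Real.cos t)/2) + C4*(Real.sin t^2/2)
      + C5*((t - Real.sin t*Real.cos t)/2))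
      (C0 + C1*Real.cos θ + C2*Real.sin θ + C3*Real.cos θ^2
        + C4*(Real.cos θ*Real.sin θ) + C5*Real.sin θ^2) θ := by
    intro θ
    have hs := Real.hasDerivAt_sin θ
    have hc := Real.hasDerivAt_cos θ
    have h := (((((hasDerivAt_id θ).const_mul C0).add (hs.const_mul C1)).sub
      (hc.const_mul C2)).add ((((hasDerivAt_id θ).add (hs.mul hc)).div_const 2).const_mul
        C3)).add (((hs.pow 2).div_const 2).const_mul C4) |>.add
      ((((hasDerivAt_id θ).sub (hs.mul hc)).div_const 2).const_mul C5)
    refine h.congr_deriv ?_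
    have hp := Real.sin_sq_add_cos_sq θ
    norm_num
    linear_combination (-(C3+C5)/2) * hp
  have hint : IntervalIntegrable (fun θ => C0 + C1 * Real.cos θ + C2 * Real.sin θ
      + C3 * Real.cos θ^2 + C4 * (Real.cos θ * Real.sin θ) + C5 * Real.sin θ^2)
      volume 0 (2*Real.pi) := by
    apply Continuous.intervalIntegrable
    continuity
  rw [intervalIntegral.integral_eq_sub_of_hasDerivAt (fun θ _ => key θ) hint]
  simp [Real.sin_two_pi, Real.cos_two_pi]
  ring


lemma trig_integrable (C0 C1 C2 C3 C4 C5 : ℝ) :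
    IntervalIntegrable (fun θ => C0 + C1 * Real.cos θ + C2 * Real.sin θ
      + C3 * Real.cos θ^2 + C4 * (Real.cos θ * Real.sin θ) + C5 * Real.sin θ^2)
      volume 0 (2*Real.pi) := by
  apply Continuous.intervalIntegrable
  continuity

/-- a C² psh function φ with det(Hess_ℂ φ) ≡ 0 on Ω is maximal: any
psh v defined near the closure of a relatively compact open U ⋐ Ω with v ≤ φ on ∂U
satisfies v ≤ φ on U. -/
theorem stmt16 {n : ℕ} (Ω : Set (Fin n → ℂ)) (hΩ : IsOpen Ω)
    (φ : (Fin n → ℂ) → ℝ) (hφ : ContDiffOn ℝ 2 φ Ω)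
    (hpsh : ∀ z ∈ Ω, ∀ v, 0 ≤ (levi φ z v v).re)
    (hdet : ∀ z ∈ Ω, (cHess φ z).det = 0) :
    ∀ U : Set (Fin n → ℂ), IsOpen U → IsCompact (closure U) → closure U ⊆ Ω →
      ∀ (W : Set (Fin n → ℂ)) (v : (Fin n → ℂ) → ℝ),
        IsOpen W → closure U ⊆ W → W ⊆ Ω → SubmeanOn v W →
        (∀ z ∈ frontier U, v z ≤ φ z) → ∀ z ∈ U, v z ≤ φ z := by
  intro U hUo hUc hUsub W v hWo hKW hWsub hsm hfr z0 hz0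
  by_contra hcon
  rw [not_le] at hcon
  set K := closure U with hK
  have hz0K : z0 ∈ K := subset_closure hz0
  have hKne : K.Nonempty := ⟨z0, hz0K⟩
  set q : (Fin n → ℂ) → ℝ := fun x => ∑ i, Complex.normSq (x i) with hq
  have hqc : Continuous q :=
    continuous_finset_sum _ (fun i _ => Complex.continuous_normSq.comp (continuous_apply i))
  have hq0 : ∀ x, 0 ≤ q x := fun x => Finset.sum_nonneg (fun i _ => Complex.normSq_nonneg _)
  obtain ⟨M, hM⟩ : ∃ M, ∀ x ∈ K, q x ≤ M := by
    obtain ⟨xm, hxmK, hxm⟩ := hUc.exists_isMaxOn hKne hqc.continuousOn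
    exact ⟨q xm, fun x hx => isMaxOn_iff.1 hxm x hx⟩
  have hM0 : (0:ℝ) ≤ M := le_trans (hq0 z0) (hM z0 hz0K)
  set ε : ℝ := (v z0 - φ z0) / (2*(M+1)) with hε
  have hεpos : 0 < ε := by
    apply div_pos (by linarith) (by linarith)
  set u : (Fin n → ℂ) → ℝ := fun x => v x + (ε * q x - φ x) with hu
  have husc : UpperSemicontinuousOn u K := by
    apply UpperSemicontinuousOn.add ((hsm.1).mono hKW)
    exact ((continuousOn_const.mul hqc.continuousOn).sub
      (hφ.continuousOn.mono hUsub)).upperSemicontinuousOn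
  obtain ⟨z1, hz1K, hz1max⟩ := usc_exists_max hUc hKne husc
  have hvφ : v z0 - φ z0 = ε * (2*(M+1)) := by
    rw [hε]; field_simp
  have hz0lt : ε * M < u z0 := by
    have h1 : u z0 = v z0 - φ z0 + ε * q z0 := by simp only [hu]; ring
    nlinarith [hq0 z0, hεpos]
  have hz1U : z1 ∈ U := by
    by_contra hne
    have hfrz : z1 ∈ frontier U := by
      rw [hUo.frontier_eq]; exact ⟨hz1K, hne⟩
    have h3 : v z1 ≤ φ z1 := hfr z1 hfrz
    have h4 : u z1 ≤ ε * M := by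
      have h5 := hM z1 hz1K
      simp only [hu]
      nlinarith [hεpos]
    have h5 := hz1max z0 hz0K
    linarith
  have hz1Ω : z1 ∈ Ω := hUsub hz1K
  have hφ1 : ContDiffOn ℝ 1 (fderiv ℝ φ) Ω := hφ.fderiv_of_isOpen hΩ (by norm_num)
  have hd1 : DifferentiableAt ℝ (fderiv ℝ φ) z1 :=
    (hφ1.differentiableOn (by norm_num)).differentiableAt (hΩ.mem_nhds hz1Ω)
  obtain ⟨a, ha0, hT⟩ := exists_null_dir φ z1 hd1 (hdet z1 hz1Ω)
  set L := fderiv ℝ φ z1 with hL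
  set B := fderiv ℝ (fderiv ℝ φ) z1 with hB
  have hanorm : 0 < ‖a‖ := norm_pos_iff.2 ha0
  have hqa : 0 < q a := by
    have hex : ∃ i, a i ≠ 0 := by
      by_contra hco; push_neg at hco; exact ha0 (funext fun i => hco i)
    obtain ⟨i, hi⟩ := hex
    exact Finset.sum_pos' (fun j _ => Complex.normSq_nonneg _)
      ⟨i, Finset.mem_univ i, Complex.normSq_pos.2 hi⟩
  set η : ℝ := ε * q a / (2 * ‖a‖^2) with hη
  have hηpos : 0 < η := by positivity
  obtain ⟨δ1, hδ1pos, hδ1Ω, htay⟩ := taylor_ub φ Ω hΩ hφ z1 hz1Ω η hηpos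
  obtain ⟨δ2', hδ2'pos, hδ2'⟩ := Metric.isOpen_iff.1 hUo z1 hz1U
  set δ := min δ1 (δ2'/2) with hδ
  have hδpos : 0 < δ := lt_min hδ1pos (by linarith)
  have hδU : closedBall z1 δ ⊆ U := by
    intro x hx
    apply hδ2'
    have h1 : dist x z1 ≤ δ := mem_closedBall.1 hx
    have h2 : δ ≤ δ2'/2 := min_le_right _ _
    exact mem_ball.2 (lt_of_le_of_lt (le_trans h1 h2) (by linarith))
  have hδΩb : closedBall z1 δ ⊆ closedBall z1 δ1 := closedBall_subset_closedBall (min_le_left _ _)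
  set r : ℝ := δ / ‖a‖ with hr
  have hrpos : 0 < r := div_pos hδpos hanorm
  have hra : r * ‖a‖ = δ := div_mul_cancel₀ δ (ne_of_gt hanorm)
  have hmem : ∀ t : ℂ, ‖t‖ ≤ r → z1 + t • a ∈ closedBall z1 δ := by
    intro t ht
    rw [mem_closedBall, dist_eq_norm, add_sub_cancel_left, norm_smul]
    calc ‖t‖ * ‖a‖ ≤ r * ‖a‖ := by nlinarith [hanorm, norm_nonneg t]
    _ = δ := hra
  have hcirc : ∀ t : ℂ, ‖t‖ ≤ r → z1 + t • a ∈ W :=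
    fun t ht => hKW (subset_closure (hδU (hmem t ht)))
  obtain ⟨hintv, hmean⟩ := hsm.2 z1 (hKW hz1K) a r hrpos hcirc
  set Sc : ℂ := ∑ i, z1 i * (starRingEnd ℂ) (a i) with hSc
  set C0 : ℝ := v z1 - ε * r^2 * q a + η * r^2 * ‖a‖^2 with hC0
  set C1 : ℝ := r * L a - 2*ε*r*Sc.re with hC1
  set C2 : ℝ := r * L (Complex.I • a) - 2*ε*r*Sc.im with hC2
  set C3 : ℝ := (1/2) * r^2 * B a a with hC3
  set C4 : ℝ := (1/2) * r^2 * (B a (Complex.I • a) + B (Complex.I • a) a) with hC4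
  set C5 : ℝ := (1/2) * r^2 * B (Complex.I • a) (Complex.I • a) with hC5
  have hpt : ∀ θ ∈ Set.Icc (0:ℝ) (2*Real.pi),
      v (z1 + ((r:ℂ) * Complex.exp ((θ:ℂ)*Complex.I)) • a)
        ≤ C0 + C1*Real.cos θ + C2*Real.sin θ + C3*Real.cos θ^2
          + C4*(Real.cos θ*Real.sin θ) + C5*Real.sin θ^2 := by
    intro θ _
    set w : ℂ := (r:ℂ) * Complex.exp ((θ:ℂ)*Complex.I) with hw
    have habsw : ‖w‖ = r := by
      rw [hw, norm_mul, Complex.norm_real, Complex.norm_exp_ofReal_mul_I, mul_one,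
        Real.norm_of_nonneg hrpos.le]
    set x := z1 + w • a with hx
    have hxball : x ∈ closedBall z1 δ := hmem w (le_of_eq habsw)
    have hxU : x ∈ U := hδU hxball
    have hxsub : x - z1 = w • a := by rw [hx]; abel
    have hmax := hz1max x (subset_closure hxU)
    have htx := htay x (hδΩb hxball)
    have hwre : w.re = r * Real.cos θ := by
      rw [hw, Complex.exp_mul_I]
      simp [Complex.cos_ofReal_re, Complex.sin_ofReal_re]
    have hwim : w.im = r * Real.sin θ := by
      rw [hw, Complex.exp_mul_I]
      simp [Complex.cos_ofReal_re, Complex.sin_ofReal_re]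
    have hwa : w • a = (r*Real.cos θ) • a + (r*Real.sin θ) • (Complex.I • a) := by
      rw [cdecomp w a, hwre, hwim]
    have hLw : L (w • a) = (r*Real.cos θ) * L a + (r*Real.sin θ) * L (Complex.I • a) := by
      rw [hwa, map_add, _root_.map_smul, _root_.map_smul]; simp [smul_eq_mul]
    have hBw : B (w • a) (w • a)
        = (r*Real.cos θ)^2 * B a a
          + (r*Real.cos θ)*(r*Real.sin θ)*(B a (Complex.I • a) + B (Complex.I • a) a)
          + (r*Real.sin θ)^2 * B (Complex.I • a) (Complex.I • a) := by
      rw [hwa]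
      simp only [map_add, _root_.map_smul, ContinuousLinearMap.add_apply,
        ContinuousLinearMap.smul_apply, smul_eq_mul]
      ring
    have hnw : ‖w • a‖^2 = r^2 * ‖a‖^2 := by
      rw [norm_smul, habsw]; ring
    have hqx : q x = q z1 + r^2 * q a + 2*(w.re*Sc.re + w.im*Sc.im) := by
      have h2 : q x = ∑ i, (Complex.normSq (z1 i) + Complex.normSq w * Complex.normSq (a i)
          + 2*((z1 i) * (starRingEnd ℂ) (w * a i)).re) := by
        simp only [hq]
        apply Finset.sum_congr rfl
        intro i _
        rw [show x i = z1 i + w * a i from rfl, Complex.normSq_add, Complex.normSq_mul]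
      have h3 : ∑ i, ((z1 i) * (starRingEnd ℂ) (w * a i)).re
          = (((starRingEnd ℂ) w) * Sc).re := by
        rw [← Complex.re_sum]
        congr 1
        rw [hSc, Finset.mul_sum]
        apply Finset.sum_congr rfl
        intro i _
        rw [map_mul]
        ring
      have h4 : (((starRingEnd ℂ) w) * Sc).re = w.re*Sc.re + w.im*Sc.im := by
        simp [Complex.mul_re, Complex.conj_re, Complex.conj_im]
      have h5 : Complex.normSq w = r^2 := by rw [← Complex.sq_norm, habsw]
      rw [h2, Finset.sum_add_distrib, Finset.sum_add_distrib, ← Finset.mul_sum,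
        ← Finset.mul_sum, h3, h4, h5]
    have hstep1 : v x ≤ v z1 + ε*q z1 - φ z1 + φ x - ε*q x := by
      simp only [hu] at hmax
      linarith
    rw [hxsub, hnw] at htx
    have hstep2 : v x ≤ v z1 + ε*q z1 - φ z1
        + (φ z1 + L (w • a) + (1/2) * B (w • a) (w • a) + η*(r^2*‖a‖^2)) - ε*q x := by
      linarith
    calc v x ≤ v z1 + ε*q z1 - φ z1
        + (φ z1 + L (w • a) + (1/2) * B (w • a) (w • a) + η*(r^2*‖a‖^2)) - ε*q x := hstep2
      _ = C0 + C1*Real.cos θ + C2*Real.sin θ + C3*Real.cos θ^2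
          + C4*(Real.cos θ*Real.sin θ) + C5*Real.sin θ^2 := by
        rw [hqx, hLw, hBw, hwre, hwim, hC0, hC1, hC2, hC3, hC4, hC5]
        ring
  have hRHSint : IntervalIntegrable (fun θ => C0 + C1*Real.cos θ + C2*Real.sin θ
      + C3*Real.cos θ^2 + C4*(Real.cos θ*Real.sin θ) + C5*Real.sin θ^2)
      volume 0 (2*Real.pi) := trig_integrable C0 C1 C2 C3 C4 C5
  have hπ : (0:ℝ) < Real.pi := Real.pi_pos
  have hmono := intervalIntegral.integral_mono_on (by linarith : (0:ℝ) ≤ 2*Real.pi)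
    hintv hRHSint hpt
  rw [integral_trig C0 C1 C2 C3 C4 C5] at hmono
  have hC35 : C3 + C5 = 0 := by
    rw [hC3, hC5]
    have : B a a + B (Complex.I • a) (Complex.I • a) = 0 := hT
    nlinarith [this]
  have hintle : (∫ θ in (0:ℝ)..(2*Real.pi),
      v (z1 + ((r:ℂ) * Complex.exp ((θ:ℂ) * Complex.I)) • a)) ≤ 2*Real.pi*C0 := by
    have h9 : Real.pi * C3 + Real.pi * C5 = Real.pi * (C3 + C5) := by ring
    rw [hC35, mul_zero] at h9
    linarith [hmono]
  have hvz1 : v z1 ≤ C0 := by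
    have h6 := hmean
    have h7 : (1 / (2 * Real.pi)) * (∫ θ in (0:ℝ)..(2*Real.pi),
        v (z1 + ((r:ℂ) * Complex.exp ((θ:ℂ) * Complex.I)) • a))
        ≤ (1 / (2 * Real.pi)) * (2*Real.pi*C0) := by
      apply mul_le_mul_of_nonneg_left hintle
      positivity
    have h8 : (1 / (2 * Real.pi)) * (2*Real.pi*C0) = C0 := by
      field_simp
    linarith
  have hηa : η * ‖a‖^2 = ε * q a / 2 := by
    rw [hη]
    field_simp
  rw [hC0] at hvz1
  nlinarith [mul_pos (mul_pos hεpos hqa) (mul_pos hrpos hrpos), hvz1, hηa]
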